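/- Let k ≥ 1 and let p, q be two distinct primes with (k+1)/2 < p, q ≤ k+1. Then the polynomial g(x) = ∑_{j=0}^{k} x^j/(j+1), cleared of denominators (i.e., lcm(1,…,k+1) · g(x)), is irreducible over ℚ. Equivalently, the polynomial 1/1 + x/2 + x²/3 + ⋯ + x^k/(k+1) is irreducible over ℚ. -/

import Mathlib

open Polynomial Finset

namespace IHT

variable {p : ℕ} [hp : Fact p.Prime]

/-- The weight `|coeff|_p ^ b * t^i` used for Newton-polygon style arguments. -/
def w (p b : ℕ) (t : ℚ) (g : ℚ[X]) (i : ℕ) : ℚ := padicNorm p (g.coeff i) ^ b * t ^ i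

lemma P_pos : (0:ℚ) < p := by exact_mod_cast hp.out.pos

lemma one_lt_P : (1:ℚ) < p := by exact_mod_cast hp.out.one_lt

lemma w_nonneg (b : ℕ) {t : ℚ} (ht : 0 ≤ t) (g : ℚ[X]) (i : ℕ) : 0 ≤ w p b t g i :=
  mul_nonneg (pow_nonneg (padicNorm.nonneg _) _) (pow_nonneg ht _)

lemma w_pos (b : ℕ) {t : ℚ} (ht : 0 < t) {g : ℚ[X]} {i : ℕ} (h : g.coeff i ≠ 0) :
    0 < w p b t g i := by
  apply mul_pos _ (pow_pos ht _)
  apply pow_pos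
  exact lt_of_le_of_ne (padicNorm.nonneg _) (Ne.symm (padicNorm.nonzero h))

lemma w_zero {b : ℕ} (hb : b ≠ 0) (t : ℚ) {g : ℚ[X]} {i : ℕ} (h : g.coeff i = 0) :
    w p b t g i = 0 := by simp [w, h, zero_pow hb]

lemma coeff_ne_zero_of_w_pos {b : ℕ} (hb : b ≠ 0) {t : ℚ} {g : ℚ[X]} {i : ℕ}
    (h : 0 < w p b t g i) : g.coeff i ≠ 0 := by
  intro h0
  rw [w_zero hb _ h0] at h
  exact lt_irrefl _ h

lemma w_mul_w (b : ℕ) (t : ℚ) (g h : ℚ[X]) (i j : ℕ) :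
    w p b t g i * w p b t h j = padicNorm p (g.coeff i * h.coeff j) ^ b * t ^ (i + j) := by
  rw [w, w, padicNorm.mul, mul_pow, pow_add]; ring

lemma w_mul_le {b : ℕ} {t : ℚ} (ht : 0 < t) (g h : ℚ[X]) (K : ℕ) {c : ℚ}
    (hall : ∀ i j, i + j = K → w p b t g i * w p b t h j ≤ c) :
    w p b t (g * h) K ≤ c := by
  obtain ⟨x, hx, hmax⟩ := Finset.exists_max_image (Finset.HasAntidiagonal.antidiagonal K)
      (fun x => padicNorm p (g.coeff x.1 * h.coeff x.2)) ⟨(0, K), by simp⟩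
  have h1 : padicNorm p ((g * h).coeff K) ≤ padicNorm p (g.coeff x.1 * h.coeff x.2) := by
    rw [Polynomial.coeff_mul]
    exact padicNorm.sum_le' (fun i hi => hmax i hi) (padicNorm.nonneg _)
  have h2 : w p b t (g * h) K ≤ w p b t g x.1 * w p b t h x.2 := by
    rw [w_mul_w, Finset.HasAntidiagonal.mem_antidiagonal.mp hx]
    exact mul_le_mul_of_nonneg_right (pow_le_pow_left₀ (padicNorm.nonneg _) h1 b)
      (pow_nonneg ht.le K)
  exact h2.trans (hall x.1 x.2 (Finset.HasAntidiagonal.mem_antidiagonal.mp hx))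

lemma w_mul_lt {b : ℕ} {t : ℚ} (ht : 0 < t) (g h : ℚ[X]) (K : ℕ) {c : ℚ}
    (hall : ∀ i j, i + j = K → w p b t g i * w p b t h j < c) :
    w p b t (g * h) K < c := by
  obtain ⟨x, hx, hmax⟩ := Finset.exists_max_image (Finset.HasAntidiagonal.antidiagonal K)
      (fun x => padicNorm p (g.coeff x.1 * h.coeff x.2)) ⟨(0, K), by simp⟩
  have h1 : padicNorm p ((g * h).coeff K) ≤ padicNorm p (g.coeff x.1 * h.coeff x.2) := by
    rw [Polynomial.coeff_mul]
    exact padicNorm.sum_le' (fun i hi => hmax i hi) (padicNorm.nonneg _)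
  have h2 : w p b t (g * h) K ≤ w p b t g x.1 * w p b t h x.2 := by
    rw [w_mul_w, Finset.HasAntidiagonal.mem_antidiagonal.mp hx]
    exact mul_le_mul_of_nonneg_right (pow_le_pow_left₀ (padicNorm.nonneg _) h1 b)
      (pow_nonneg ht.le K)
  exact lt_of_le_of_lt h2 (hall x.1 x.2 (Finset.HasAntidiagonal.mem_antidiagonal.mp hx))

lemma w_mul_eq {b : ℕ} (hb : b ≠ 0) {t : ℚ} (ht : 0 < t) (g h : ℚ[X]) {i0 j0 : ℕ} {c : ℚ}
    (hc : 0 < c) (hmain : w p b t g i0 * w p b t h j0 = c)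
    (hothers : ∀ i j, i + j = i0 + j0 → i ≠ i0 → w p b t g i * w p b t h j < c) :
    w p b t (g * h) (i0 + j0) = c := by
  have hmem : (i0, j0) ∈ Finset.HasAntidiagonal.antidiagonal (i0 + j0) := by simp
  have hcoeff : (g * h).coeff (i0 + j0) = g.coeff i0 * h.coeff j0 +
      ∑ x ∈ (Finset.HasAntidiagonal.antidiagonal (i0 + j0)).erase (i0, j0), g.coeff x.1 * h.coeff x.2 := by
    rw [Polynomial.coeff_mul, ← Finset.add_sum_erase _ _ hmem]
  have hmain0 : g.coeff i0 * h.coeff j0 ≠ 0 := by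
    intro h0
    rw [w_mul_w, h0, padicNorm.zero, zero_pow hb, zero_mul] at hmain
    exact hc.ne hmain
  have hnm : 0 < padicNorm p (g.coeff i0 * h.coeff j0) :=
    lt_of_le_of_ne (padicNorm.nonneg _) (Ne.symm (padicNorm.nonzero hmain0))
  have hrest : padicNorm p (∑ x ∈ (Finset.HasAntidiagonal.antidiagonal (i0 + j0)).erase (i0, j0),
      g.coeff x.1 * h.coeff x.2) < padicNorm p (g.coeff i0 * h.coeff j0) := by
    apply padicNorm.sum_lt' _ hnm
    intro x hx
    have hxa : x.1 + x.2 = i0 + j0 := Finset.HasAntidiagonal.mem_antidiagonal.mp (Finset.mem_of_mem_erase hx)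
    have hxne : x.1 ≠ i0 := by
      intro h1
      apply Finset.ne_of_mem_erase hx
      have : x.2 = j0 := by omega
      exact Prod.ext h1 this
    have hlt := hothers x.1 x.2 hxa hxne
    rw [← hmain, w_mul_w, w_mul_w, hxa] at hlt
    have h3 : padicNorm p (g.coeff x.1 * h.coeff x.2) ^ b <
        padicNorm p (g.coeff i0 * h.coeff j0) ^ b :=
      lt_of_mul_lt_mul_right hlt (pow_nonneg ht.le _)
    exact lt_of_pow_lt_pow_left₀ b (padicNorm.nonneg _) h3
  have hnorm : padicNorm p ((g * h).coeff (i0 + j0)) =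
      padicNorm p (g.coeff i0 * h.coeff j0) := by
    rw [hcoeff, padicNorm.add_eq_max_of_ne hrest.ne', max_eq_left hrest.le]
  rw [← hmain, w_mul_w, w]
  rw [hnorm]

lemma exists_spec {b : ℕ} (hb : b ≠ 0) {t : ℚ} (ht : 0 < t) (g : ℚ[X]) (hg : g ≠ 0) :
    ∃ (W : ℚ) (fst lst : ℕ), 0 < W ∧ fst ≤ lst ∧ lst ≤ g.natDegree ∧
      w p b t g fst = W ∧ w p b t g lst = W ∧
      (∀ i, w p b t g i ≤ W) ∧ (∀ i, lst < i → w p b t g i < W) ∧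
      (∀ i, i < fst → w p b t g i < W) := by
  classical
  obtain ⟨m, hm, hmax⟩ := Finset.exists_max_image (Finset.range (g.natDegree + 1))
      (w p b t g) ⟨0, by simp⟩
  set W := w p b t g m with hW
  have hlead : g.coeff g.natDegree ≠ 0 := by
    have := Polynomial.leadingCoeff_ne_zero.mpr hg
    rwa [Polynomial.leadingCoeff] at this
  have hWpos : 0 < W :=
    lt_of_lt_of_le (w_pos b ht hlead) (hmax g.natDegree (by simp))
  set T := (Finset.range (g.natDegree + 1)).filter (fun i => w p b t g i = W) with hT
  have hTne : T.Nonempty := ⟨m, Finset.mem_filter.mpr ⟨hm, rfl⟩⟩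
  refine ⟨W, T.min' hTne, T.max' hTne, hWpos, T.min'_le _ (T.max'_mem hTne), ?_, ?_, ?_, ?_, ?_, ?_⟩
  · have h1 := Finset.mem_filter.mp (T.max'_mem hTne)
    have h2 := Finset.mem_range.mp h1.1
    omega
  · exact (Finset.mem_filter.mp (T.min'_mem hTne)).2
  · exact (Finset.mem_filter.mp (T.max'_mem hTne)).2
  · intro i
    by_cases hi : i ≤ g.natDegree
    · exact hmax i (Finset.mem_range.mpr (by omega))
    · rw [w_zero hb _ (Polynomial.coeff_eq_zero_of_natDegree_lt (by omega))]
      exact hWpos.le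
  · intro i hi
    by_cases hi2 : i ≤ g.natDegree
    · have hne : w p b t g i ≠ W := by
        intro he
        have : i ∈ T := Finset.mem_filter.mpr ⟨Finset.mem_range.mpr (by omega), he⟩
        have := Finset.le_max' T i this
        omega
      exact lt_of_le_of_ne (hmax i (Finset.mem_range.mpr (by omega))) hne
    · rw [w_zero hb _ (Polynomial.coeff_eq_zero_of_natDegree_lt (by omega))]
      exact hWpos
  · intro i hi
    have hT' := Finset.mem_range.mp (Finset.mem_filter.mp (T.min'_mem hTne)).1
    have hi2 : i ≤ g.natDegree := by omega
    have hne : w p b t g i ≠ W := by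
      intro he
      have : i ∈ T := Finset.mem_filter.mpr ⟨Finset.mem_range.mpr (by omega), he⟩
      have := Finset.min'_le T i this
      omega
    exact lt_of_le_of_ne (hmax i (Finset.mem_range.mpr (by omega))) hne

lemma w_eq_zpow {b : ℕ} {a : ℤ} {g : ℚ[X]} {i : ℕ} (hgi : g.coeff i ≠ 0) :
    w p b ((p:ℚ) ^ a) g i = (p:ℚ) ^ (a * i - b * padicValRat p (g.coeff i)) := by
  have hP : (p:ℚ) ≠ 0 := P_pos.ne'
  rw [w, padicNorm.eq_zpow_of_nonzero hgi,
    ← zpow_natCast ((p:ℚ) ^ (-padicValRat p (g.coeff i))) b, ← zpow_mul,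
    ← zpow_natCast ((p:ℚ) ^ a) i, ← zpow_mul, ← zpow_add₀ hP]
  ring_nf


/-- the polynomial `∑ x^j/(j+1)` -/
noncomputable def F (k : ℕ) : ℚ[X] := ∑ j ∈ Finset.range (k + 1), C ((1:ℚ) / (j + 1)) * X ^ j

lemma F_coeff (k j : ℕ) : (F k).coeff j = if j ≤ k then (1:ℚ) / (j + 1) else 0 := by
  rw [F, Polynomial.finset_sum_coeff]
  simp only [Polynomial.coeff_C_mul, Polynomial.coeff_X_pow, mul_ite, mul_one, mul_zero]
  rw [Finset.sum_ite_eq (Finset.range (k + 1)) j (fun j' => (1:ℚ) / (j' + 1))]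
  simp only [Finset.mem_range]
  split_ifs with h1 h2 h2 <;> first | rfl | omega

lemma F_coeff_of_le {k j : ℕ} (hj : j ≤ k) : (F k).coeff j = (1:ℚ) / (j + 1) := by
  rw [F_coeff, if_pos hj]

lemma F_coeff_ne_zero {k j : ℕ} (hj : j ≤ k) : (F k).coeff j ≠ 0 := by
  rw [F_coeff_of_le hj]
  positivity

lemma F_natDegree (k : ℕ) : (F k).natDegree = k := by
  apply le_antisymm
  · apply Polynomial.natDegree_sum_le_of_forall_le
    intro j hj
    apply le_trans (Polynomial.natDegree_C_mul_le _ _)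
    simp only [Polynomial.natDegree_X_pow]
    exact Nat.lt_succ_iff.mp (Finset.mem_range.mp hj)
  · exact Polynomial.le_natDegree_of_ne_zero (F_coeff_ne_zero le_rfl)

lemma F_ne_zero (k : ℕ) : F k ≠ 0 := fun h => F_coeff_ne_zero (Nat.zero_le k) (by rw [h]; simp)

variable {p : ℕ} [hp : Fact p.Prime]

lemma padicNorm_inv (x : ℚ) : padicNorm p x⁻¹ = (padicNorm p x)⁻¹ := by
  rcases eq_or_ne x 0 with rfl | hx
  · simp
  · have h1 : padicNorm p x⁻¹ * padicNorm p x = 1 := by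
      rw [← padicNorm.mul, inv_mul_cancel₀ hx, padicNorm.one]
    exact eq_inv_of_mul_eq_one_left h1

lemma F_norm_at {k j : ℕ} (hj : j ≤ k) (h2p : k + 1 < 2 * p) :
    padicNorm p ((F k).coeff j) = if j = p - 1 then (p:ℚ) else 1 := by
  have hp2 : 2 ≤ p := hp.out.two_le
  have hcast : ((j:ℚ) + 1) = ((j + 1 : ℕ) : ℚ) := by push_cast; ring
  rw [F_coeff_of_le hj, one_div, hcast, padicNorm_inv]
  split_ifs with h
  · have : j + 1 = p := by omega
    rw [this, padicNorm.padicNorm_p_of_prime, inv_inv]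
  · have hnd : ¬ p ∣ (j + 1) := by
      rintro ⟨m, hm⟩
      rcases Nat.lt_or_ge m 2 with hm2 | hm2
      · interval_cases m <;> omega
      · have : 2 * p ≤ p * m := by
          calc 2 * p = p * 2 := by ring
          _ ≤ p * m := Nat.mul_le_mul_left p hm2
        omega
    rw [(padicNorm.nat_eq_one_iff _).mpr hnd, inv_one]

/-- helper: if `L = A * u` with `0 ≤ L ≤ A`, `0 < A`, then `L = 0` or `L = A`. -/
lemma int_zero_or_eq {A L u : ℤ} (hA : 0 < A) (h : L = A * u) (h2 : 0 ≤ L) (h3 : L ≤ A) :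
    L = 0 ∨ L = A := by
  rcases le_or_gt u 0 with hu | hu
  · left
    have : L ≤ 0 := h ▸ mul_nonpos_of_nonneg_of_nonpos hA.le hu
    omega
  · right
    have h1 : (1:ℤ) ≤ u := hu
    have : A * 1 ≤ A * u := mul_le_mul_of_nonneg_left h1 hA.le
    rw [mul_one] at this
    omega


lemma mul_lt_aux {x X y Y : ℚ} (h1 : x < X) (h2 : y ≤ Y) (hx : 0 ≤ x) (hY : 0 < Y) :
    x * y < X * Y := by
  rw [mul_comm x y, mul_comm X Y]
  exact mul_lt_mul' h2 h1 hx hY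

variable {p : ℕ} [hp : Fact p.Prime]

lemma wF1_val {k j : ℕ} (hj : j ≤ k) (h2p : k + 1 < 2 * p) :
    w p (p - 1) ((p:ℚ) ^ (-1 : ℤ)) (F k) j
      = if j = p - 1 then 1 else (p:ℚ) ^ (-(j:ℤ)) := by
  have hP0 : (0:ℚ) < p := P_pos
  have hp2 : 2 ≤ p := hp.out.two_le
  rw [w, F_norm_at hj h2p]
  have ht : ((p:ℚ) ^ (-1:ℤ)) ^ j = (p:ℚ) ^ (-(j:ℤ)) := by
    rw [← zpow_natCast ((p:ℚ) ^ (-1:ℤ)) j, ← zpow_mul]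
    norm_num
  split_ifs with h
  · subst h
    rw [ht, ← zpow_natCast (p:ℚ) (p-1), ← zpow_add₀ hP0.ne']
    have : ((p-1 : ℕ):ℤ) + -((p-1:ℕ):ℤ) = 0 := by ring
    rw [this, zpow_zero]
  · rw [one_pow, ht, one_mul]

lemma wF1_le {k : ℕ} (h2p : k + 1 < 2 * p) (j : ℕ) :
    w p (p - 1) ((p:ℚ) ^ (-1 : ℤ)) (F k) j ≤ 1 := by
  have hp2 : 2 ≤ p := hp.out.two_le
  by_cases hj : j ≤ k
  · rw [wF1_val hj h2p]
    split_ifs with h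
    · exact le_refl 1
    · have h2 : (p:ℚ) ^ (-(j:ℤ)) ≤ (p:ℚ) ^ (0:ℤ) := by
        rw [zpow_le_zpow_iff_right₀ one_lt_P]
        omega
      simpa using h2
  · rw [w_zero (by omega) _ (by rw [F_coeff]; simp [hj])]
    norm_num

lemma wF1_p {k : ℕ} (h2p : k + 1 < 2 * p) (hpk : p ≤ k + 1) :
    w p (p - 1) ((p:ℚ) ^ (-1 : ℤ)) (F k) (p - 1) = 1 := by
  have hp2 : 2 ≤ p := hp.out.two_le
  rw [wF1_val (by omega) h2p, if_pos rfl]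

lemma wF1_lt {k j : ℕ} (h2p : k + 1 < 2 * p) (hj : j ≤ k) (hj0 : j ≠ 0) (hjp : j ≠ p - 1) :
    w p (p - 1) ((p:ℚ) ^ (-1 : ℤ)) (F k) j < 1 := by
  rw [wF1_val hj h2p, if_neg hjp]
  have h2 : (p:ℚ) ^ (-(j:ℤ)) < (p:ℚ) ^ (0:ℤ) := by
    rw [zpow_lt_zpow_iff_right₀ one_lt_P]
    omega
  simpa using h2

lemma wF2_val {k d j : ℕ} (hj : j ≤ k) (h2p : k + 1 < 2 * p) (hdk : (p - 1) + d = k) :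
    w p d ((p:ℚ) ^ (1 : ℤ)) (F k) j
      = if j = p - 1 then (p:ℚ) ^ (k:ℤ) else (p:ℚ) ^ (j:ℤ) := by
  have hP0 : (0:ℚ) < p := P_pos
  have hp2 : 2 ≤ p := hp.out.two_le
  rw [w, F_norm_at hj h2p]
  have ht : ((p:ℚ) ^ (1:ℤ)) ^ j = (p:ℚ) ^ (j:ℤ) := by
    rw [← zpow_natCast ((p:ℚ) ^ (1:ℤ)) j, ← zpow_mul]
    norm_num
  split_ifs with h
  · subst h
    rw [ht, ← zpow_natCast (p:ℚ) d, ← zpow_add₀ hP0.ne']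
    congr 1
    omega
  · rw [one_pow, ht, one_mul]

lemma wF2_le {k d : ℕ} (h2p : k + 1 < 2 * p) (hdk : (p - 1) + d = k) (hd : d ≠ 0) (j : ℕ) :
    w p d ((p:ℚ) ^ (1 : ℤ)) (F k) j ≤ (p:ℚ) ^ (k:ℤ) := by
  by_cases hj : j ≤ k
  · rw [wF2_val hj h2p hdk]
    split_ifs with h
    · exact le_refl _
    · rw [zpow_le_zpow_iff_right₀ one_lt_P]; omega
  · rw [w_zero hd _ (by rw [F_coeff]; simp [hj])]
    positivity

lemma wF2_p {k d : ℕ} (h2p : k + 1 < 2 * p) (hdk : (p - 1) + d = k) :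
    w p d ((p:ℚ) ^ (1 : ℤ)) (F k) (p - 1) = (p:ℚ) ^ (k:ℤ) := by
  rw [wF2_val (by omega) h2p hdk, if_pos rfl]

lemma wF2_k {k d : ℕ} (h2p : k + 1 < 2 * p) (hdk : (p - 1) + d = k) (hd : d ≠ 0) :
    w p d ((p:ℚ) ^ (1 : ℤ)) (F k) k = (p:ℚ) ^ (k:ℤ) := by
  rw [wF2_val le_rfl h2p hdk, if_neg (by omega)]

lemma wF2_lt {k d j : ℕ} (h2p : k + 1 < 2 * p) (hdk : (p - 1) + d = k) (hd : d ≠ 0)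
    (hj : j ≤ k) (hjp : j ≠ p - 1) (hjk : j ≠ k) :
    w p d ((p:ℚ) ^ (1 : ℤ)) (F k) j < (p:ℚ) ^ (k:ℤ) := by
  rw [wF2_val hj h2p hdk, if_neg hjp, zpow_lt_zpow_iff_right₀ one_lt_P]
  omega

lemma noAB {k d : ℕ} (hk : 1 ≤ k) (hd : d ≠ 0) (hdk : (p - 1) + d = k)
    (x : ℚ[X]) (Vx : ℚ) (Fx Lx : ℕ)
    (h1le : ∀ i, w p (p - 1) ((p:ℚ) ^ (-1 : ℤ)) x i ≤ 1)
    (h1p : w p (p - 1) ((p:ℚ) ^ (-1 : ℤ)) x (p - 1) = 1)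
    (hFval : w p d ((p:ℚ) ^ (1 : ℤ)) x Fx = Vx)
    (hVle : ∀ i, w p d ((p:ℚ) ^ (1 : ℤ)) x i ≤ Vx)
    (hVup : Vx ≤ (p:ℚ) ^ (k:ℤ))
    (hLx : Lx = Fx + d) (hLdeg : Lx ≤ x.natDegree) :
    k ≤ x.natDegree := by
  have hp2 : 2 ≤ p := hp.out.two_le
  have hbne : p - 1 ≠ 0 := by omega
  have hP0 : (0:ℚ) < p := P_pos
  have hP1 : (p:ℚ) ≠ 1 := ne_of_gt one_lt_P
  have hne : x.coeff (p - 1) ≠ 0 :=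
    coeff_ne_zero_of_w_pos hbne (by rw [h1p]; norm_num)
  have hval : padicValRat p (x.coeff (p - 1)) = -1 := by
    rw [w_eq_zpow hne, ← zpow_zero (p:ℚ)] at h1p
    have h0 := (zpow_right_inj₀ hP0 hP1).mp h1p
    have hc : ((p - 1 : ℕ):ℤ) ≠ 0 := by exact_mod_cast hbne
    have h2 : ((p - 1 : ℕ):ℤ) * (-1 - padicValRat p (x.coeff (p - 1))) = 0 := by
      linear_combination h0
    rcases mul_eq_zero.mp h2 with h3 | h3
    · exact absurd h3 hc
    · linarith
  have hw2p : w p d ((p:ℚ) ^ (1:ℤ)) x (p - 1) = (p:ℚ) ^ (k:ℤ) := by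
    rw [w_eq_zpow hne, hval]
    congr 1
    omega
  have hVx : Vx = (p:ℚ) ^ (k:ℤ) := le_antisymm hVup (hw2p ▸ hVle (p - 1))
  have hFx : p - 1 ≤ Fx := by
    by_contra hFlt
    push_neg at hFlt
    have hneF : x.coeff Fx ≠ 0 :=
      coeff_ne_zero_of_w_pos hd (by rw [hFval, hVx]; positivity)
    set v := padicValRat p (x.coeff Fx) with hv
    have hb1 : (-1:ℤ) * Fx - ((p - 1 : ℕ):ℤ) * v ≤ 0 := by
      have hle := h1le Fx
      rw [w_eq_zpow hneF, ← zpow_zero (p:ℚ)] at hle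
      exact (zpow_le_zpow_iff_right₀ one_lt_P).mp hle
    have he : (1:ℤ) * Fx - (d:ℤ) * v = (k:ℤ) := by
      have h6 := hFval.trans hVx
      rw [w_eq_zpow hneF] at h6
      exact (zpow_right_inj₀ hP0 hP1).mp h6
    have e1 : -(((p - 1 : ℕ):ℤ) * v) ≤ (Fx:ℤ) := by linarith
    have e2 : (d:ℤ) * (-(((p - 1 : ℕ):ℤ) * v)) ≤ (d:ℤ) * Fx :=
      mul_le_mul_of_nonneg_left e1 (by positivity)
    have e3 : (k:ℤ) * (Fx:ℤ) < (k:ℤ) * ((p - 1 : ℕ):ℤ) := by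
      apply mul_lt_mul_of_pos_left _ (by exact_mod_cast hk)
      exact_mod_cast hFlt
    have e4 : ((p - 1 : ℕ):ℤ) + (d:ℤ) = (k:ℤ) := by exact_mod_cast hdk
    have he' : (Fx:ℤ) - d * v = k := by linarith
    have he2 : ((p - 1 : ℕ):ℤ) * ((Fx:ℤ) - d * v) = ((p - 1 : ℕ):ℤ) * k := by rw [he']
    have e5 : (((p - 1 : ℕ):ℤ) + d) * Fx = (k:ℤ) * Fx := by rw [e4]
    nlinarith [e2, e3, he2, e5]
  omega

lemma step {k : ℕ} (hk : 1 ≤ k) (hp1 : k + 1 < 2 * p) (hp2 : p ≤ k + 1)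
    {g h : ℚ[X]} (hgh : F k = g * h)
    (hg0 : g.coeff 0 = 1) (hh0 : h.coeff 0 = 1)
    (hr : 1 ≤ g.natDegree) (hs : 1 ≤ h.natDegree) (hdeg : g.natDegree + h.natDegree = k) :
    g.natDegree = p - 1 ∨ h.natDegree = p - 1 := by
  have hp2' : 2 ≤ p := hp.out.two_le
  have hbne : p - 1 ≠ 0 := by omega
  have hP0 : (0:ℚ) < p := P_pos
  have hP1 : (p:ℚ) ≠ 1 := ne_of_gt one_lt_P
  have ht₁ : (0:ℚ) < (p:ℚ) ^ (-1:ℤ) := zpow_pos hP0 _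
  have hgne : g ≠ 0 := fun h0 => by simp [h0] at hg0
  have hhne : h ≠ 0 := fun h0 => by simp [h0] at hh0
  obtain ⟨Wg, fg, lg, hWg0, hfglg, hlgdeg, hwfg, hwlg, hWgle, hWglast, hWgfst⟩ :=
    exists_spec (p := p) hbne ht₁ g hgne
  obtain ⟨Wh, fh, lh, hWh0, hfhlh, hlhdeg, hwfh, hwlh, hWhle, hWhlast, hWhfst⟩ :=
    exists_spec (p := p) hbne ht₁ h hhne
  have hwg0 : w p (p-1) ((p:ℚ)^(-1:ℤ)) g 0 = 1 := by
    rw [w, hg0, padicNorm.one, one_pow, pow_zero, mul_one]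
  have hwh0 : w p (p-1) ((p:ℚ)^(-1:ℤ)) h 0 = 1 := by
    rw [w, hh0, padicNorm.one, one_pow, pow_zero, mul_one]
  have hWg1 : 1 ≤ Wg := hwg0 ▸ hWgle 0
  have hWh1 : 1 ≤ Wh := hwh0 ▸ hWhle 0
  have hprod : w p (p-1) ((p:ℚ)^(-1:ℤ)) (F k) (lg + lh) = Wg * Wh := by
    rw [hgh]
    apply w_mul_eq hbne ht₁ g h (mul_pos hWg0 hWh0) (by rw [hwlg, hwlh])
    intro i j hij hne
    rcases lt_or_gt_of_ne hne with hlt | hgt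
    · have hj : lh < j := by omega
      rw [mul_comm (w _ _ _ g i) _, mul_comm Wg Wh]
      exact mul_lt_aux (hWhlast j hj) (hWgle i) (w_nonneg _ ht₁.le _ _) hWg0
    · exact mul_lt_aux (hWglast i hgt) (hWhle j) (w_nonneg _ ht₁.le _ _) hWh0
  have hsumle : lg + lh ≤ k := by omega
  have hWgWh : Wg = 1 ∧ Wh = 1 := by
    have hle1 : Wg * Wh ≤ 1 := hprod ▸ wF1_le hp1 (lg + lh)
    constructor <;> nlinarith
  have hnotlt : ¬ (lg + lh < p - 1) := by
    intro hlt
    have hlt2 : w p (p-1) ((p:ℚ)^(-1:ℤ)) (F k) (p - 1) < Wg * Wh := by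
      rw [hgh]
      apply w_mul_lt ht₁
      intro i j hij
      rcases (by omega : lg < i ∨ lh < j) with h1 | h1
      · exact mul_lt_aux (hWglast i h1) (hWhle j) (w_nonneg _ ht₁.le _ _) hWh0
      · rw [mul_comm (w _ _ _ g i) _, mul_comm Wg Wh]
        exact mul_lt_aux (hWhlast j h1) (hWgle i) (w_nonneg _ ht₁.le _ _) hWg0
    rw [wF1_p hp1 hp2, hWgWh.1, hWgWh.2, mul_one] at hlt2
    exact lt_irrefl _ hlt2
  have hsum : lg + lh = p - 1 := by
    by_contra hne2
    have hlt6 := wF1_lt hp1 hsumle (by omega) hne2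
    rw [hprod, hWgWh.1, hWgWh.2, mul_one] at hlt6
    exact lt_irrefl _ hlt6
  have hdvd1 : ∀ (x : ℚ[X]) (lx : ℕ), w p (p-1) ((p:ℚ)^(-1:ℤ)) x lx = 1 → lx ≤ p - 1 →
      lx = 0 ∨ lx = p - 1 := by
    intro x lx hwx hle
    have hcx : x.coeff lx ≠ 0 := coeff_ne_zero_of_w_pos hbne (by rw [hwx]; norm_num)
    rw [w_eq_zpow hcx, ← zpow_zero (p:ℚ)] at hwx
    have h0 := (zpow_right_inj₀ hP0 hP1).mp hwx
    have hLA : (lx:ℤ) = ((p-1:ℕ):ℤ) * (-(padicValRat p (x.coeff lx))) := by linarith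
    have hA0 : (0:ℤ) < ((p-1:ℕ):ℤ) := by exact_mod_cast Nat.pos_of_ne_zero hbne
    rcases int_zero_or_eq hA0 hLA (by positivity) (by exact_mod_cast hle) with h1 | h1
    · left; exact_mod_cast h1
    · right; exact_mod_cast h1
  have hlgd := hdvd1 g lg (by rw [hwlg, hWgWh.1]) (by omega)
  have hlhd := hdvd1 h lh (by rw [hwlh, hWgWh.2]) (by omega)
  by_cases hpk : p = k + 1
  · exfalso
    rcases hlgd with h1 | h1 <;> rcases hlhd with h2 | h2 <;> omega
  have hplek : p ≤ k := by omega
  set d := k + 1 - p with hddef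
  have hd : d ≠ 0 := by omega
  have hdk : (p - 1) + d = k := by omega
  have ht₂ : (0:ℚ) < (p:ℚ) ^ (1:ℤ) := zpow_pos hP0 _
  obtain ⟨Vg, Fg, Lg, hVg0, hFgLg, hLgdeg, hvFg, hvLg, hVgle, hVglast, hVgfst⟩ :=
    exists_spec (p := p) hd ht₂ g hgne
  obtain ⟨Vh, Fh, Lh, hVh0, hFhLh, hLhdeg, hvFh, hvLh, hVhle, hVhlast, hVhfst⟩ :=
    exists_spec (p := p) hd ht₂ h hhne
  have hvg0 : w p d ((p:ℚ)^(1:ℤ)) g 0 = 1 := by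
    rw [w, hg0, padicNorm.one, one_pow, pow_zero, mul_one]
  have hvh0 : w p d ((p:ℚ)^(1:ℤ)) h 0 = 1 := by
    rw [w, hh0, padicNorm.one, one_pow, pow_zero, mul_one]
  have hVg1 : 1 ≤ Vg := hvg0 ▸ hVgle 0
  have hVh1 : 1 ≤ Vh := hvh0 ▸ hVhle 0
  have hprod2 : w p d ((p:ℚ)^(1:ℤ)) (F k) (Lg + Lh) = Vg * Vh := by
    rw [hgh]
    apply w_mul_eq hd ht₂ g h (mul_pos hVg0 hVh0) (by rw [hvLg, hvLh])
    intro i j hij hne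
    rcases lt_or_gt_of_ne hne with hlt | hgt
    · have hj : Lh < j := by omega
      rw [mul_comm (w _ _ _ g i) _, mul_comm Vg Vh]
      exact mul_lt_aux (hVhlast j hj) (hVgle i) (w_nonneg _ ht₂.le _ _) hVg0
    · exact mul_lt_aux (hVglast i hgt) (hVhle j) (w_nonneg _ ht₂.le _ _) hVh0
  have hLsumle : Lg + Lh ≤ k := by omega
  have hLsum : Lg + Lh = k := by
    by_contra hne2
    have hlt3 : w p d ((p:ℚ)^(1:ℤ)) (F k) k < Vg * Vh := by
      rw [hgh]
      apply w_mul_lt ht₂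
      intro i j hij
      rcases (by omega : Lg < i ∨ Lh < j) with h1 | h1
      · exact mul_lt_aux (hVglast i h1) (hVhle j) (w_nonneg _ ht₂.le _ _) hVh0
      · rw [mul_comm (w _ _ _ g i) _, mul_comm Vg Vh]
        exact mul_lt_aux (hVhlast j h1) (hVgle i) (w_nonneg _ ht₂.le _ _) hVg0
    rw [wF2_k hp1 hdk hd] at hlt3
    have hle4 : Vg * Vh ≤ (p:ℚ)^(k:ℤ) := hprod2 ▸ wF2_le hp1 hdk hd (Lg + Lh)
    linarith
  have hVgVh : Vg * Vh = (p:ℚ)^(k:ℤ) := by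
    rw [← hprod2, hLsum, wF2_k hp1 hdk hd]
  have hprod2f : w p d ((p:ℚ)^(1:ℤ)) (F k) (Fg + Fh) = Vg * Vh := by
    rw [hgh]
    apply w_mul_eq hd ht₂ g h (mul_pos hVg0 hVh0) (by rw [hvFg, hvFh])
    intro i j hij hne
    rcases lt_or_gt_of_ne hne with hlt | hgt
    · exact mul_lt_aux (hVgfst i hlt) (hVhle j) (w_nonneg _ ht₂.le _ _) hVh0
    · have hj : j < Fh := by omega
      rw [mul_comm (w _ _ _ g i) _, mul_comm Vg Vh]
      exact mul_lt_aux (hVhfst j hj) (hVgle i) (w_nonneg _ ht₂.le _ _) hVg0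
  have hFsum : Fg + Fh = p - 1 := by
    have hFle : Fg + Fh ≤ k := by omega
    by_contra hne2
    have hFnek : Fg + Fh ≠ k := by
      intro hFk
      have hlt5 : w p d ((p:ℚ)^(1:ℤ)) (F k) (p - 1) < Vg * Vh := by
        rw [hgh]
        apply w_mul_lt ht₂
        intro i j hij
        rcases (by omega : i < Fg ∨ j < Fh) with h1 | h1
        · exact mul_lt_aux (hVgfst i h1) (hVhle j) (w_nonneg _ ht₂.le _ _) hVh0
        · rw [mul_comm (w _ _ _ g i) _, mul_comm Vg Vh]
          exact mul_lt_aux (hVhfst j h1) (hVgle i) (w_nonneg _ ht₂.le _ _) hVg0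
      rw [wF2_p hp1 hdk, ← hVgVh] at hlt5
      exact lt_irrefl _ hlt5
    have hlt7 := wF2_lt hp1 hdk hd hFle hne2 hFnek
    rw [hprod2f] at hlt7
    exact absurd hVgVh (ne_of_lt hlt7)
  have hdvd2 : ∀ (x : ℚ[X]) (Fx Lx : ℕ), w p d ((p:ℚ)^(1:ℤ)) x Fx = w p d ((p:ℚ)^(1:ℤ)) x Lx →
      0 < w p d ((p:ℚ)^(1:ℤ)) x Fx → Fx ≤ Lx → Lx - Fx ≤ d → Lx - Fx = 0 ∨ Lx - Fx = d := by
    intro x Fx Lx heq hpos hFL hled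
    have hcF : x.coeff Fx ≠ 0 := coeff_ne_zero_of_w_pos hd hpos
    have hcL : x.coeff Lx ≠ 0 := coeff_ne_zero_of_w_pos hd (by rw [← heq]; exact hpos)
    rw [w_eq_zpow hcF, w_eq_zpow hcL] at heq
    have h0 := (zpow_right_inj₀ hP0 hP1).mp heq
    have hLA : ((Lx - Fx : ℕ):ℤ) = (d:ℤ) *
        (padicValRat p (x.coeff Lx) - padicValRat p (x.coeff Fx)) := by
      push_cast [Nat.cast_sub hFL]
      linarith
    have hA0 : (0:ℤ) < (d:ℤ) := by exact_mod_cast Nat.pos_of_ne_zero hd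
    rcases int_zero_or_eq hA0 hLA (by positivity) (by exact_mod_cast hled) with h1 | h1
    · left; exact_mod_cast h1
    · right; exact_mod_cast h1
  have hspan_sum : (Lg - Fg) + (Lh - Fh) = d := by omega
  have hspg := hdvd2 g Fg Lg (by rw [hvFg, hvLg]) (by rw [hvFg]; exact hVg0) hFgLg (by omega)
  have hsph := hdvd2 h Fh Lh (by rw [hvFh, hvLh]) (by rw [hvFh]; exact hVh0) hFhLh (by omega)
  rcases hlgd with hA | hA
  · -- lg = 0, so lh = p - 1
    have hlhp : lh = p - 1 := by omega
    rcases hsph with hB | hB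
    · right
      omega
    · exfalso
      have hVhup : Vh ≤ (p:ℚ)^(k:ℤ) := by
        rw [← hVgVh]
        have h9 : 1 * Vh ≤ Vg * Vh := mul_le_mul_of_nonneg_right hVg1 hVh0.le
        linarith
      have hkh := noAB hk hd hdk h Vh Fh Lh
        (fun i => by rw [← hWgWh.2]; exact hWhle i) (by rw [← hWgWh.2, ← hwlh, hlhp])
        hvFh hVhle hVhup (by omega) hLhdeg
      omega
  · rcases hspg with hB | hB
    · left
      omega
    · exfalso
      have hVgup : Vg ≤ (p:ℚ)^(k:ℤ) := by
        rw [← hVgVh]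
        have h9 : Vg * 1 ≤ Vg * Vh := mul_le_mul_of_nonneg_left hVh1 hVg0.le
        linarith
      have hkg := noAB hk hd hdk g Vg Fg Lg
        (fun i => by rw [← hWgWh.1]; exact hWgle i) (by rw [← hWgWh.1, ← hwlg, hA])
        hvFg hVgle hVgup (by omega) hLgdeg
      omega

end IHT

open Polynomial in
theorem irreducible_harmonic_truncation (k : ℕ) (hk : 1 ≤ k) (p q : ℕ) (hp : p.Prime)
    (hq : q.Prime) (hpq : p ≠ q) (hp1 : k + 1 < 2 * p) (hp2 : p ≤ k + 1)
    (hq1 : k + 1 < 2 * q) (hq2 : q ≤ k + 1) :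
    Irreducible (∑ j ∈ Finset.range (k + 1), C ((1 : ℚ) / (j + 1)) * X ^ j) := by
  haveI hpf : Fact p.Prime := ⟨hp⟩
  haveI hqf : Fact q.Prime := ⟨hq⟩
  show Irreducible (IHT.F k)
  have hdegF : (IHT.F k).natDegree = k := IHT.F_natDegree k
  have hF0 : (IHT.F k) ≠ 0 := IHT.F_ne_zero k
  constructor
  · intro hu
    have := Polynomial.natDegree_eq_zero_of_isUnit hu
    omega
  · intro a b hab
    by_contra hcon
    push_neg at hcon
    obtain ⟨ha, hb⟩ := hcon
    have hane : a ≠ 0 := by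
      rintro rfl
      rw [zero_mul] at hab
      exact hF0 hab
    have hbne : b ≠ 0 := by
      rintro rfl
      rw [mul_zero] at hab
      exact hF0 hab
    have hdegs : a.natDegree + b.natDegree = k := by
      rw [← Polynomial.natDegree_mul hane hbne, ← hab, hdegF]
    have hdeg1 : ∀ (x : ℚ[X]), x ≠ 0 → ¬ IsUnit x → 1 ≤ x.natDegree := by
      intro x hx hux
      rcases Nat.eq_zero_or_pos x.natDegree with h0 | h1
      · exfalso
        obtain ⟨c, hc⟩ := Polynomial.natDegree_eq_zero.mp h0
        have hc0 : c ≠ 0 := by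
          rintro rfl
          rw [map_zero] at hc
          exact hx hc.symm
        exact hux (hc ▸ Polynomial.isUnit_C.mpr hc0.isUnit)
      · exact h1
    have hra : 1 ≤ a.natDegree := hdeg1 a hane ha
    have hrb : 1 ≤ b.natDegree := hdeg1 b hbne hb
    have hab0 : a.coeff 0 * b.coeff 0 = 1 := by
      have hF00 : (IHT.F k).coeff 0 = 1 := by
        rw [IHT.F_coeff_of_le (Nat.zero_le k)]
        norm_num
      rw [hab, Polynomial.mul_coeff_zero] at hF00
      exact hF00
    have ha0 : a.coeff 0 ≠ 0 := fun h0 => by simp [h0] at hab0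
    set g := Polynomial.C (a.coeff 0)⁻¹ * a with hgdef
    set h := Polynomial.C (a.coeff 0) * b with hhdef
    have hC : Polynomial.C (a.coeff 0)⁻¹ * Polynomial.C (a.coeff 0) = 1 := by
      rw [← Polynomial.C_mul, inv_mul_cancel₀ ha0, Polynomial.C_1]
    have hgh : IHT.F k = g * h := by
      rw [hab, hgdef, hhdef]
      calc a * b = (Polynomial.C (a.coeff 0)⁻¹ * Polynomial.C (a.coeff 0)) * (a * b) := by
            rw [hC, one_mul]
        _ = Polynomial.C (a.coeff 0)⁻¹ * a * (Polynomial.C (a.coeff 0) * b) := by ring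
    have hg0 : g.coeff 0 = 1 := by
      rw [hgdef, Polynomial.coeff_C_mul, inv_mul_cancel₀ ha0]
    have hh0 : h.coeff 0 = 1 := by
      rw [hhdef, Polynomial.coeff_C_mul, hab0]
    have hdg : g.natDegree = a.natDegree := Polynomial.natDegree_C_mul (inv_ne_zero ha0)
    have hdh : h.natDegree = b.natDegree := Polynomial.natDegree_C_mul ha0
    have hstep_p := IHT.step (p := p) hk hp1 hp2 hgh hg0 hh0
      (by rw [hdg]; exact hra) (by rw [hdh]; exact hrb) (by rw [hdg, hdh]; exact hdegs)
    have hstep_q := IHT.step (p := q) hk hq1 hq2 hgh hg0 hh0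
      (by rw [hdg]; exact hra) (by rw [hdh]; exact hrb) (by rw [hdg, hdh]; exact hdegs)
    rw [hdg, hdh] at hstep_p hstep_q
    have hp2' : 2 ≤ p := hp.two_le
    have hq2' : 2 ≤ q := hq.two_le
    rcases hstep_p with h1 | h1 <;> rcases hstep_q with h2 | h2 <;> omega
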